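/- Let $n = ms$ for integers $m \ge d \ge 0$ and $s \ge 2$ with $n \ge sd$. Then $\binom{n - sd}{m-d,\,m-d,\,\dots,\,m-d} \big/ \binom{n}{m,\,m,\,\dots,\,m} \ge \frac{1}{(sd)^{sd}}$ when $d \ge 1$ (and the ratio is 1 when $d = 0$). Consequently, if a $d$-junta-sum $P : \mathbb{Z}_s^n \to G$ is nonzero at some point of the balanced multislice $\mathcal{S}^n_\mu$ (where each symbol appears exactly $m = n/s$ times), then $\Pr_{\mathbf{x} \sim \mathcal{S}^n_\mu}[P(\mathbf{x}) \ne 0] \ge 1/(sd)^{sd}$. -/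

import Mathlib

open Finset

/-- `f` depends only on the coordinates in `I`. -/
def DependsOnlyOn {n : ℕ} {A G : Type*} (f : (Fin n → A) → G) (I : Finset (Fin n)) : Prop :=
  ∀ x y : Fin n → A, (∀ i ∈ I, x i = y i) → f x = f y

/-- `f` is a sum of functions each depending on at most `d` coordinates
(a `d`-junta-sum). -/
def IsJuntaSum {n : ℕ} {A G : Type*} [AddCommMonoid G] (d : ℕ)
    (f : (Fin n → A) → G) : Prop :=
  ∃ (k : ℕ) (g : Fin k → (Fin n → A) → G) (I : Fin k → Finset (Fin n)),
    (∀ j, (I j).card ≤ d ∧ DependsOnlyOn (g j) (I j)) ∧ ∀ x, f x = ∑ j, g j x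

variable {n s : ℕ} [NeZero s]

def Mslice (E : Finset (Fin n)) (β : Fin n → ZMod s) (c : ZMod s → ℕ) :
    Finset (Fin n → ZMod s) :=
  univ.filter (fun a => (∀ j ∉ E, a j = β j) ∧ ∀ σ, (E.filter (fun j => a j = σ)).card = c σ)

lemma mem_Mslice {E : Finset (Fin n)} {β : Fin n → ZMod s} {c : ZMod s → ℕ}
    {a : Fin n → ZMod s} :
    a ∈ Mslice E β c ↔
      (∀ j ∉ E, a j = β j) ∧ ∀ σ, (E.filter (fun j => a j = σ)).card = c σ := by
  simp [Mslice]

lemma swap_mem_Mslice {E : Finset (Fin n)} {β : Fin n → ZMod s} {c : ZMod s → ℕ}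
    {a : Fin n → ZMod s} {p q : Fin n} (hp : p ∈ E) (hq : q ∈ E)
    (ha : a ∈ Mslice E β c) : (a ∘ Equiv.swap p q) ∈ Mslice E β c := by
  rw [mem_Mslice] at ha ⊢
  obtain ⟨h1, h2⟩ := ha
  constructor
  · intro l hl
    have hlp : l ≠ p := fun h => hl (h ▸ hp)
    have hlq : l ≠ q := fun h => hl (h ▸ hq)
    simp [Function.comp, Equiv.swap_apply_of_ne_of_ne hlp hlq, h1 l hl]
  · intro σ
    rw [← h2 σ]
    apply Finset.card_bij' (fun l _ => Equiv.swap p q l) (fun l _ => Equiv.swap p q l)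
    · intro l hl
      simp only [mem_filter] at hl ⊢
      refine ⟨?_, hl.2⟩
      by_cases hlp : l = p
      · subst hlp; simpa [Equiv.swap_apply_left] using hq
      by_cases hlq : l = q
      · subst hlq; simpa [Equiv.swap_apply_right] using hp
      · simpa [Equiv.swap_apply_of_ne_of_ne hlp hlq] using hl.1
    · intro l hl
      simp only [mem_filter] at hl ⊢
      constructor
      · by_cases hlp : l = p
        · subst hlp; simpa [Equiv.swap_apply_left] using hq
        by_cases hlq : l = q
        · subst hlq; simpa [Equiv.swap_apply_right] using hp
        · simpa [Equiv.swap_apply_of_ne_of_ne hlp hlq] using hl.1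
      · simpa [Function.comp, Equiv.swap_apply_self] using hl.2
    · intro l _; exact Equiv.swap_apply_self _ _ _
    · intro l _; exact Equiv.swap_apply_self _ _ _

lemma filter_card_of_mem {E : Finset (Fin n)} {j : Fin n} (hj : j ∈ E)
    (p : Fin n → Prop) [DecidablePred p] :
    (E.filter p).card = ((E.erase j).filter p).card + (if p j then 1 else 0) := by
  rw [Finset.filter_erase]
  by_cases hpj : p j
  · rw [if_pos hpj, Finset.card_erase_of_mem (Finset.mem_filter.2 ⟨hj, hpj⟩)]
    have : 1 ≤ (E.filter p).card := Finset.card_pos.2 ⟨j, Finset.mem_filter.2 ⟨hj, hpj⟩⟩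
    omega
  · rw [if_neg hpj, Finset.erase_eq_of_notMem (fun h => hpj (Finset.mem_filter.1 h).2)]
    omega

lemma mem_Mslice_erase {E : Finset (Fin n)} {β : Fin n → ZMod s} {c : ZMod s → ℕ}
    {j : Fin n} {σ : ZMod s} (hj : j ∈ E) (hcσ : 1 ≤ c σ) (a : Fin n → ZMod s) :
    a ∈ Mslice (E.erase j) (Function.update β j σ) (Function.update c σ (c σ - 1)) ↔
      a ∈ Mslice E β c ∧ a j = σ := by
  rw [mem_Mslice, mem_Mslice]
  constructor
  · rintro ⟨h1, h2⟩
    have haj : a j = σ := by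
      have := h1 j (Finset.notMem_erase j E)
      simpa using this
    refine ⟨⟨?_, ?_⟩, haj⟩
    · intro l hl
      have hlj : l ≠ j := fun h => hl (h ▸ hj)
      have := h1 l (fun h => hl (Finset.mem_of_mem_erase h))
      rwa [Function.update_of_ne hlj] at this
    · intro ρ
      rw [filter_card_of_mem hj, h2 ρ]
      by_cases hρ : ρ = σ
      · subst hρ; rw [if_pos haj, Function.update_self]; omega
      · rw [if_neg (fun h : a j = ρ => hρ (h ▸ haj.symm ▸ rfl)),
          Function.update_of_ne hρ]
        omega
  · rintro ⟨⟨h1, h2⟩, haj⟩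
    constructor
    · intro l hl
      by_cases hlj : l = j
      · subst hlj; rw [Function.update_self]; exact haj
      · rw [Function.update_of_ne hlj]
        exact h1 l (fun h => hl (Finset.mem_erase.2 ⟨hlj, h⟩))
    · intro ρ
      have := filter_card_of_mem hj (fun l => a l = ρ)
      rw [h2 ρ] at this
      by_cases hρ : ρ = σ
      · subst hρ; rw [if_pos haj] at this; rw [Function.update_self]; omega
      · rw [if_neg (fun h : a j = ρ => hρ (h ▸ haj.symm ▸ rfl))] at this
        rw [Function.update_of_ne hρ]; omega

lemma Mslice_double_count {E : Finset (Fin n)} {β : Fin n → ZMod s} {c : ZMod s → ℕ}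
    {j : Fin n} {σ : ZMod s} (hj : j ∈ E) (hcσ : 1 ≤ c σ) :
    E.card * (Mslice (E.erase j) (Function.update β j σ)
        (Function.update c σ (c σ - 1))).card
      = c σ * (Mslice E β c).card := by
  classical
  have key : ∀ p ∈ E, ((Mslice E β c).filter (fun a => a p = σ)).card
      = ((Mslice E β c).filter (fun a => a j = σ)).card := by
    intro p hp
    apply Finset.card_bij' (fun a _ => a ∘ Equiv.swap p j) (fun a _ => a ∘ Equiv.swap p j)
    · intro a ha
      simp only [Finset.mem_filter] at ha ⊢
      exact ⟨swap_mem_Mslice hp hj ha.1, by simpa [Function.comp] using ha.2⟩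
    · intro a ha
      simp only [Finset.mem_filter] at ha ⊢
      refine ⟨swap_mem_Mslice hp hj ha.1, ?_⟩
      simpa [Function.comp, Equiv.swap_apply_left] using ha.2
    · intro a _; funext l; simp [Function.comp, Equiv.swap_apply_self]
    · intro a _; funext l; simp [Function.comp, Equiv.swap_apply_self]
  have count : ∑ p ∈ E, ((Mslice E β c).filter (fun a => a p = σ)).card
      = c σ * (Mslice E β c).card := by
    have : ∀ a ∈ Mslice E β c, (E.filter (fun p => a p = σ)).card = c σ := by
      intro a ha; exact ((mem_Mslice.1 ha).2 σ)
    calc ∑ p ∈ E, ((Mslice E β c).filter (fun a => a p = σ)).card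
        = ∑ p ∈ E, ∑ a ∈ Mslice E β c, (if a p = σ then 1 else 0) :=
          Finset.sum_congr rfl fun p _ => Finset.card_filter _ _
      _ = ∑ a ∈ Mslice E β c, ∑ p ∈ E, (if a p = σ then 1 else 0) := Finset.sum_comm
      _ = ∑ a ∈ Mslice E β c, c σ := by
          apply Finset.sum_congr rfl; intro a ha
          rw [← this a ha, Finset.card_filter]
      _ = c σ * (Mslice E β c).card := by simp [Finset.sum_const, mul_comm]
  have heq : ((Mslice E β c).filter (fun a => a j = σ)).card
      = (Mslice (E.erase j) (Function.update β j σ)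
          (Function.update c σ (c σ - 1))).card := by
    congr 1
    ext a
    rw [Finset.mem_filter, mem_Mslice_erase hj hcσ a]
  calc E.card * (Mslice (E.erase j) (Function.update β j σ)
        (Function.update c σ (c σ - 1))).card
      = ∑ p ∈ E, ((Mslice E β c).filter (fun a => a j = σ)).card := by
        rw [Finset.sum_const, smul_eq_mul, heq]
    _ = ∑ p ∈ E, ((Mslice E β c).filter (fun a => a p = σ)).card :=
        Finset.sum_congr rfl (fun p hp => (key p hp).symm)
    _ = c σ * (Mslice E β c).card := count

lemma isJuntaSum_zero_const {A G : Type*} [AddCommMonoid G] {P : (Fin n → A) → G}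
    (hP : IsJuntaSum 0 P) (x y : Fin n → A) : P x = P y := by
  obtain ⟨k, g, I, h1, h2⟩ := hP
  rw [h2 x, h2 y]
  apply Finset.sum_congr rfl
  intro i _
  have hI : I i = ∅ := Finset.card_eq_zero.1 (Nat.le_zero.1 (h1 i).1)
  exact (h1 i).2 x y (fun l hl => by simp [hI] at hl)

lemma isJuntaSum_swapDeriv {A G : Type*} [AddCommGroup G] {d : ℕ}
    {P : (Fin n → A) → G} (hP : IsJuntaSum (d + 1) P) {j k : Fin n} (hjk : j ≠ k)
    (σ τ : A) :
    IsJuntaSum d (fun y =>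
      P (Function.update (Function.update y j σ) k τ)
        - P (Function.update (Function.update y j τ) k σ)) := by
  obtain ⟨K, g, I, h1, h2⟩ := hP
  classical
  refine ⟨K, fun i y => g i (Function.update (Function.update y j σ) k τ)
      - g i (Function.update (Function.update y j τ) k σ),
    fun i => if j ∈ I i ∨ k ∈ I i then ((I i).erase j).erase k else ∅, fun i => ⟨?_, ?_⟩, ?_⟩
  · dsimp only
    by_cases h : j ∈ I i ∨ k ∈ I i
    · rw [if_pos h]
      rcases h with hj' | hk'
      · calc (((I i).erase j).erase k).card ≤ ((I i).erase j).card :=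
              Finset.card_le_card (Finset.erase_subset _ _)
          _ = (I i).card - 1 := Finset.card_erase_of_mem hj'
          _ ≤ d := by have := (h1 i).1; omega
      · by_cases hj' : j ∈ I i
        · calc (((I i).erase j).erase k).card ≤ ((I i).erase j).card :=
                Finset.card_le_card (Finset.erase_subset _ _)
            _ = (I i).card - 1 := Finset.card_erase_of_mem hj'
            _ ≤ d := by have := (h1 i).1; omega
        · rw [Finset.erase_eq_of_notMem hj',
            Finset.card_erase_of_mem hk']
          have := (h1 i).1; omega
    · rw [if_neg h]; simp
  · dsimp only
    by_cases h : j ∈ I i ∨ k ∈ I i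
    · rw [if_pos h]
      intro x y hxy
      have agree : ∀ (v w : A),
          g i (Function.update (Function.update x j v) k w)
            = g i (Function.update (Function.update y j v) k w) := by
        intro v w
        apply (h1 i).2
        intro l hl
        by_cases hlk : l = k
        · subst hlk; simp
        by_cases hlj : l = j
        · subst hlj; simp [Function.update_of_ne hjk]
        · rw [Function.update_of_ne hlk, Function.update_of_ne hlj,
            Function.update_of_ne hlk, Function.update_of_ne hlj]
          exact hxy l (Finset.mem_erase.2 ⟨hlk, Finset.mem_erase.2 ⟨hlj, hl⟩⟩)
      simp only [agree]
    · push_neg at h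
      intro x y _
      have zero : ∀ z : Fin n → A,
          g i (Function.update (Function.update z j σ) k τ)
            - g i (Function.update (Function.update z j τ) k σ) = 0 := by
        intro z
        rw [sub_eq_zero]
        apply (h1 i).2
        intro l hl
        have hlj : l ≠ j := fun e => h.1 (e ▸ hl)
        have hlk : l ≠ k := fun e => h.2 (e ▸ hl)
        rw [Function.update_of_ne hlk, Function.update_of_ne hlj,
          Function.update_of_ne hlk, Function.update_of_ne hlj]
      simp only [zero]
  · intro y
    dsimp only
    rw [h2, h2, ← Finset.sum_sub_distrib]

lemma Mslice_connected {G : Type*} [AddCommGroup G] {P : (Fin n → ZMod s) → G}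
    {E : Finset (Fin n)} {β : Fin n → ZMod s} {c : ZMod s → ℕ}
    (H : ∀ x ∈ Mslice E β c, P x ≠ 0 → ∀ j ∈ E, ∀ k ∈ E,
      P (x ∘ Equiv.swap j k) = P x) :
    ∀ x ∈ Mslice E β c, P x ≠ 0 → ∀ y ∈ Mslice E β c, P y = P x := by
  classical
  suffices h : ∀ t : ℕ, ∀ x ∈ Mslice E β c, P x ≠ 0 → ∀ y ∈ Mslice E β c,
      (univ.filter (fun l => x l ≠ y l)).card ≤ t → P y = P x by
    intro x hx hPx y hy
    exact h _ x hx hPx y hy le_rfl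
  intro t
  induction t with
  | zero =>
    intro x hx hPx y hy hcard
    have : x = y := by
      funext l
      by_contra hne
      have : l ∈ univ.filter (fun l => x l ≠ y l) := by simp [hne]
      have := Finset.card_pos.2 ⟨l, this⟩
      omega
    rw [this]
  | succ t ih =>
    intro x hx hPx y hy hcard
    by_cases hxy : x = y
    · rw [hxy]
    have hex : ∃ j, x j ≠ y j := by
      by_contra hno
      push_neg at hno
      exact hxy (funext hno)
    obtain ⟨j, hj⟩ := hex
    have hjE : j ∈ E := by
      by_contra hjE
      rw [(mem_Mslice.1 hx).1 j hjE, (mem_Mslice.1 hy).1 j hjE] at hj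
      exact hj rfl
    set v := y j with hv
    -- find k ∈ E with x k = v and x k ≠ y k
    have hcounts : (E.filter (fun l => x l = v)).card = (E.filter (fun l => y l = v)).card := by
      rw [(mem_Mslice.1 hx).2 v, (mem_Mslice.1 hy).2 v]
    have hsplitx : ((E.filter (fun l => x l = v)).filter (fun l => x l = y l)).card
          + ((E.filter (fun l => x l = v)).filter (fun l => ¬ x l = y l)).card
        = (E.filter (fun l => x l = v)).card :=
      Finset.card_filter_add_card_filter_not (fun l => x l = y l)
    have hsplity : ((E.filter (fun l => y l = v)).filter (fun l => x l = y l)).card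
          + ((E.filter (fun l => y l = v)).filter (fun l => ¬ x l = y l)).card
        = (E.filter (fun l => y l = v)).card :=
      Finset.card_filter_add_card_filter_not (fun l => x l = y l)
    have hsame : (E.filter (fun l => x l = v)).filter (fun l => x l = y l)
        = (E.filter (fun l => y l = v)).filter (fun l => x l = y l) := by
      ext l
      simp only [Finset.mem_filter]
      constructor
      · rintro ⟨⟨hlE, h1⟩, h2⟩; exact ⟨⟨hlE, h2 ▸ h1⟩, h2⟩
      · rintro ⟨⟨hlE, h1⟩, h2⟩; exact ⟨⟨hlE, h2.symm ▸ h1⟩, h2⟩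
    have hsamec : ((E.filter (fun l => x l = v)).filter (fun l => x l = y l)).card
        = ((E.filter (fun l => y l = v)).filter (fun l => x l = y l)).card := by
      rw [hsame]
    have hBne : j ∈ (E.filter (fun l => y l = v)).filter (fun l => ¬ x l = y l) :=
      Finset.mem_filter.2 ⟨Finset.mem_filter.2 ⟨hjE, hv.symm⟩,
        fun e => hj (e.trans hv.symm)⟩
    have hAne : ((E.filter (fun l => x l = v)).filter (fun l => ¬ x l = y l)).Nonempty := by
      rw [← Finset.card_pos]
      have hb := Finset.card_pos.2 ⟨j, hBne⟩
      omega
    obtain ⟨k, hk⟩ := hAne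
    simp only [Finset.mem_filter] at hk
    obtain ⟨⟨hkE, hkv⟩, hkne⟩ := hk
    have hkj : k ≠ j := by
      intro e; subst e; exact hj (hkv.trans hv.symm ▸ hkv)
    set x' := x ∘ Equiv.swap j k with hx'
    have hx'M : x' ∈ Mslice E β c := swap_mem_Mslice hjE hkE hx
    have hPx' : P x' = P x := H x hx hPx j hjE k hkE
    have hsub : univ.filter (fun l => x' l ≠ y l)
        ⊆ (univ.filter (fun l => x l ≠ y l)).erase j := by
      intro l hl
      simp only [Finset.mem_filter, Finset.mem_univ, true_and] at hl
      have hlj : l ≠ j := by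
        intro e; subst e
        apply hl
        simp [hx', Function.comp, Equiv.swap_apply_left, hkv]
        exact hv
      rw [Finset.mem_erase]
      refine ⟨hlj, ?_⟩
      simp only [Finset.mem_filter, Finset.mem_univ, true_and]
      by_cases hlk : l = k
      · subst hlk; exact hkne
      · intro he
        apply hl
        simpa [hx', Function.comp, Equiv.swap_apply_of_ne_of_ne hlj hlk] using he
    have hcard' : (univ.filter (fun l => x' l ≠ y l)).card ≤ t := by
      have h1 : j ∈ univ.filter (fun l => x l ≠ y l) := by
        simp only [Finset.mem_filter, Finset.mem_univ, true_and]; exact fun e => hj (e.trans hv.symm)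
      have h2 := Finset.card_le_card hsub
      rw [Finset.card_erase_of_mem h1] at h2
      have h3 := Finset.card_pos.2 ⟨j, h1⟩
      omega
    calc P y = P x' := ih x' hx'M (hPx' ▸ hPx) y hy hcard'
      _ = P x := hPx'

open Classical in
lemma card_Q_le_card_P {G : Type*} [AddCommGroup G] {P : (Fin n → ZMod s) → G}
    {E : Finset (Fin n)} {β : Fin n → ZMod s} {c : ZMod s → ℕ}
    {j k : Fin n} {σ τ : ZMod s} (hj : j ∈ E) (hk : k ∈ E) (hjk : j ≠ k) (hστ : σ ≠ τ)
    {M' : Finset (Fin n → ZMod s)}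
    (hchar : ∀ a ∈ M', a ∈ Mslice E β c ∧ a j = σ ∧ a k = τ) :
    (M'.filter (fun a => P (Function.update (Function.update a j σ) k τ)
        - P (Function.update (Function.update a j τ) k σ) ≠ 0)).card
      ≤ ((Mslice E β c).filter (fun a => P a ≠ 0)).card := by
  classical
  have key : ∀ a ∈ M', Function.update (Function.update a j σ) k τ = a
      ∧ Function.update (Function.update a j τ) k σ = a ∘ Equiv.swap j k := by
    intro a ha
    obtain ⟨haM, haj, hak⟩ := hchar a ha
    constructor
    · funext l
      by_cases hlk : l = k
      · subst hlk; rw [Function.update_self, hak]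
      by_cases hlj : l = j
      · subst hlj; rw [Function.update_of_ne hlk, Function.update_self, haj]
      · rw [Function.update_of_ne hlk, Function.update_of_ne hlj]
    · funext l
      by_cases hlk : l = k
      · subst hlk
        rw [Function.update_self, Function.comp_apply, Equiv.swap_apply_right, haj]
      by_cases hlj : l = j
      · subst hlj
        rw [Function.update_of_ne hlk, Function.update_self, Function.comp_apply,
          Equiv.swap_apply_left, hak]
      · rw [Function.update_of_ne hlk, Function.update_of_ne hlj, Function.comp_apply,
          Equiv.swap_apply_of_ne_of_ne hlj hlk]
  apply Finset.card_le_card_of_injOn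
    (fun a => if P a ≠ 0 then a else a ∘ Equiv.swap j k)
  · intro a ha
    rw [Finset.mem_coe, Finset.mem_filter] at ha
    obtain ⟨haM', hQ⟩ := ha
    obtain ⟨haM, haj, hak⟩ := hchar a haM'
    rw [(key a haM').1, (key a haM').2] at hQ
    beta_reduce
    by_cases hPa : P a ≠ 0
    · rw [if_pos hPa]
      exact Finset.mem_filter.2 ⟨haM, hPa⟩
    · rw [if_neg hPa]
      push_neg at hPa
      refine Finset.mem_filter.2 ⟨swap_mem_Mslice hj hk haM, ?_⟩
      intro h0
      rw [hPa, h0, sub_zero] at hQ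
      exact hQ rfl
  · intro a ha b hb hab
    have inv : ∀ x ∈ M'.filter (fun a => P (Function.update (Function.update a j σ) k τ)
        - P (Function.update (Function.update a j τ) k σ) ≠ 0),
        (fun w : Fin n → ZMod s => if w j = σ then w else w ∘ Equiv.swap j k)
          ((fun a => if P a ≠ 0 then a else a ∘ Equiv.swap j k) x) = x := by
      intro x hx
      rw [Finset.mem_filter] at hx
      obtain ⟨hxM', _⟩ := hx
      obtain ⟨hxM, hxj, hxk⟩ := hchar x hxM'
      dsimp only
      by_cases hPx : P x ≠ 0
      · rw [if_pos hPx, if_pos hxj]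
      · rw [if_neg hPx]
        have : (x ∘ Equiv.swap j k) j = τ := by
          rw [Function.comp_apply, Equiv.swap_apply_left, hxk]
        rw [if_neg (by rw [this]; exact fun e => hστ e.symm)]
        funext l
        rw [Function.comp_apply, Function.comp_apply, Equiv.swap_apply_self]
    calc a = _ := (inv a ha).symm
      _ = _ := by rw [hab]
      _ = b := inv b hb

open Classical in
lemma core_lemma {G : Type*} [AddCommGroup G] (B : ℕ) :
    ∀ (d : ℕ) (P : (Fin n → ZMod s) → G), IsJuntaSum d P →
    ∀ (E : Finset (Fin n)) (β : Fin n → ZMod s) (c : ZMod s → ℕ)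
      (a₀ : Fin n → ZMod s), a₀ ∈ Mslice E β c → P a₀ ≠ 0 →
      (∀ σ, B + d ≤ c σ) →
      ((B + 1 : ℝ) / (n : ℝ)) ^ (2 * d) * ((Mslice E β c).card : ℝ)
        ≤ (((Mslice E β c).filter (fun a => P a ≠ 0)).card : ℝ) := by
  intro d
  induction d with
  | zero =>
    intro P hP E β c a₀ ha₀ hP0 _
    rw [mul_zero, pow_zero, one_mul]
    have : (Mslice E β c).filter (fun a => P a ≠ 0) = Mslice E β c := by
      apply Finset.filter_true_of_mem
      intro a _
      rw [isJuntaSum_zero_const hP a a₀]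
      exact hP0
    rw [this]
  | succ d ih =>
    intro P hP E β c a₀ ha₀ hP0 hc
    set M := Mslice E β c with hM
    -- n ≥ 1 and B + 1 ≤ n
    have hBn : B + 1 ≤ n := by
      have h1 : B + (d + 1) ≤ c 0 := hc 0
      have h2 : c 0 ≤ E.card := by
        rw [← (mem_Mslice.1 ha₀).2 0]
        exact Finset.card_le_card (Finset.filter_subset _ _)
      have h3 : E.card ≤ n := by
        simpa using Finset.card_le_univ E
      omega
    have hn0 : (0 : ℝ) < n := by
      have : 1 ≤ n := by omega
      exact_mod_cast Nat.lt_of_lt_of_le Nat.zero_lt_one this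
    have hr0 : (0 : ℝ) ≤ (B + 1 : ℝ) / n := by positivity
    have hr1 : (B + 1 : ℝ) / n ≤ 1 := by
      rw [div_le_one hn0]
      exact_mod_cast hBn
    by_cases hcase : ∃ x ∈ M, P x ≠ 0 ∧ ∃ j ∈ E, ∃ k ∈ E,
        P (x ∘ Equiv.swap j k) ≠ P x
    · obtain ⟨x, hxM, hPx, j, hj, k, hk, hne⟩ := hcase
      set σ := x j with hσ
      set τ := x k with hτ
      have hστ : σ ≠ τ := by
        intro he
        apply hne
        congr 1
        funext l
        by_cases hlj : l = j
        · subst hlj; rw [Function.comp_apply, Equiv.swap_apply_left, ← hτ, ← he]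
        by_cases hlk : l = k
        · subst hlk; rw [Function.comp_apply, Equiv.swap_apply_right, ← hσ, he]
        · rw [Function.comp_apply, Equiv.swap_apply_of_ne_of_ne hlj hlk]
      have hjk : j ≠ k := fun e => hστ (by rw [hσ, hτ, e])
      -- first removal
      have hcσ : 1 ≤ c σ := le_trans (by omega) (hc σ)
      set E₁ := E.erase j with hE₁
      set β₁ := Function.update β j σ with hβ₁
      set c₁ := Function.update c σ (c σ - 1) with hc₁
      have hcount1 : E.card * (Mslice E₁ β₁ c₁).card = c σ * M.card :=
        Mslice_double_count hj hcσ
      -- second removal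
      have hk1 : k ∈ E₁ := Finset.mem_erase.2 ⟨fun e => hjk e.symm, hk⟩
      have hc₁τ : c₁ τ = c τ := by rw [hc₁, Function.update_of_ne (fun e => hστ e.symm)]
      have hcτ1 : 1 ≤ c₁ τ := by rw [hc₁τ]; exact le_trans (by omega) (hc τ)
      set E₂ := E₁.erase k with hE₂
      set β₂ := Function.update β₁ k τ with hβ₂
      set c₂ := Function.update c₁ τ (c₁ τ - 1) with hc₂
      have hcount2 : E₁.card * (Mslice E₂ β₂ c₂).card = c₁ τ * (Mslice E₁ β₁ c₁).card :=
        Mslice_double_count hk1 hcτ1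
      -- characterization of M₂
      have hchar : ∀ a, a ∈ Mslice E₂ β₂ c₂ ↔ (a ∈ M ∧ a j = σ) ∧ a k = τ := by
        intro a
        rw [hE₂, hβ₂, hc₂, mem_Mslice_erase hk1 hcτ1 a, hE₁, hβ₁, hc₁,
          mem_Mslice_erase hj hcσ a]
      -- x ∈ M₂
      have hxM₂ : x ∈ Mslice E₂ β₂ c₂ := (hchar x).2 ⟨⟨hxM, rfl⟩, rfl⟩
      -- Q
      set Q : (Fin n → ZMod s) → G := fun y =>
        P (Function.update (Function.update y j σ) k τ)
          - P (Function.update (Function.update y j τ) k σ) with hQdef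
      have hQ : IsJuntaSum d Q := isJuntaSum_swapDeriv hP hjk σ τ
      have hu₁ : Function.update (Function.update x j σ) k τ = x := by
        funext l
        by_cases hlk : l = k
        · subst hlk; rw [Function.update_self, hτ]
        by_cases hlj : l = j
        · subst hlj; rw [Function.update_of_ne hlk, Function.update_self, hσ]
        · rw [Function.update_of_ne hlk, Function.update_of_ne hlj]
      have hu₂ : Function.update (Function.update x j τ) k σ = x ∘ Equiv.swap j k := by
        funext l
        by_cases hlk : l = k
        · subst hlk; rw [Function.update_self, Function.comp_apply,
            Equiv.swap_apply_right, hσ]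
        by_cases hlj : l = j
        · subst hlj; rw [Function.update_of_ne hlk, Function.update_self,
            Function.comp_apply, Equiv.swap_apply_left, hτ]
        · rw [Function.update_of_ne hlk, Function.update_of_ne hlj, Function.comp_apply,
            Equiv.swap_apply_of_ne_of_ne hlj hlk]
      have hQx : Q x ≠ 0 := by
        rw [hQdef]
        dsimp only
        rw [hu₁, hu₂]
        exact sub_ne_zero.2 (Ne.symm hne)
      have hc₂bound : ∀ ρ, B + d ≤ c₂ ρ := by
        intro ρ
        rw [hc₂, hc₁]
        by_cases hρτ : ρ = τ
        · subst hρτ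
          rw [Function.update_self, Function.update_of_ne (fun e => hστ e.symm)]
          have := hc τ; omega
        · rw [Function.update_of_ne hρτ]
          by_cases hρσ : ρ = σ
          · subst hρσ; rw [Function.update_self]; have := hc σ; omega
          · rw [Function.update_of_ne hρσ]; have := hc ρ; omega
      have hIH := ih Q hQ E₂ β₂ c₂ x hxM₂ hQx hc₂bound
      have hinj : ((Mslice E₂ β₂ c₂).filter (fun a => Q a ≠ 0)).card
          ≤ (M.filter (fun a => P a ≠ 0)).card := by
        apply card_Q_le_card_P hj hk hjk hστ
        intro a ha
        obtain ⟨⟨h1, h2⟩, h3⟩ := (hchar a).1 ha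
        exact ⟨h1, h2, h3⟩
      -- size comparison in ℕ
      have hEn : E.card ≤ n := by simpa using Finset.card_le_univ E
      have hE₁n : E₁.card ≤ n := by simpa using Finset.card_le_univ E₁
      have hsize1 : (B + 1) * M.card ≤ n * (Mslice E₁ β₁ c₁).card := by
        calc (B + 1) * M.card ≤ c σ * M.card :=
              Nat.mul_le_mul_right _ (le_trans (by omega) (hc σ))
          _ = E.card * (Mslice E₁ β₁ c₁).card := hcount1.symm
          _ ≤ n * (Mslice E₁ β₁ c₁).card := Nat.mul_le_mul_right _ hEn
      have hsize2 : (B + 1) * (Mslice E₁ β₁ c₁).card ≤ n * (Mslice E₂ β₂ c₂).card := by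
        calc (B + 1) * (Mslice E₁ β₁ c₁).card ≤ c₁ τ * (Mslice E₁ β₁ c₁).card := by
              apply Nat.mul_le_mul_right
              rw [hc₁τ]; exact le_trans (by omega) (hc τ)
          _ = E₁.card * (Mslice E₂ β₂ c₂).card := hcount2.symm
          _ ≤ n * (Mslice E₂ β₂ c₂).card := Nat.mul_le_mul_right _ hE₁n
      have hsizeR : ((B + 1 : ℝ) / n) ^ 2 * (M.card : ℝ) ≤ ((Mslice E₂ β₂ c₂).card : ℝ) := by
        rw [div_pow, div_mul_eq_mul_div, div_le_iff₀ (by positivity)]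
        have : ((B + 1) * ((B + 1) * M.card) : ℕ) ≤ ((n * (n * (Mslice E₂ β₂ c₂).card)) : ℕ) := by
          calc (B + 1) * ((B + 1) * M.card) ≤ (B + 1) * (n * (Mslice E₁ β₁ c₁).card) :=
                Nat.mul_le_mul_left _ hsize1
            _ = n * ((B + 1) * (Mslice E₁ β₁ c₁).card) := by ring
            _ ≤ n * (n * (Mslice E₂ β₂ c₂).card) := Nat.mul_le_mul_left _ hsize2
        have := (Nat.cast_le (α := ℝ)).2 this
        push_cast at this ⊢
        nlinarith [this]
      calc ((B + 1 : ℝ) / n) ^ (2 * (d + 1)) * (M.card : ℝ)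
          = ((B + 1 : ℝ) / n) ^ (2 * d) * (((B + 1 : ℝ) / n) ^ 2 * M.card) := by ring
        _ ≤ ((B + 1 : ℝ) / n) ^ (2 * d) * ((Mslice E₂ β₂ c₂).card : ℝ) := by
            apply mul_le_mul_of_nonneg_left hsizeR (by positivity)
        _ ≤ (((Mslice E₂ β₂ c₂).filter (fun a => Q a ≠ 0)).card : ℝ) := hIH
        _ ≤ ((M.filter (fun a => P a ≠ 0)).card : ℝ) := by exact_mod_cast hinj
    · push_neg at hcase
      have hall : ∀ y ∈ M, P y = P a₀ := by
        apply Mslice_connected _ a₀ ha₀ hP0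
        intro x hx hPx j hj k hk
        exact hcase x hx hPx j hj k hk
      have : M.filter (fun a => P a ≠ 0) = M := by
        apply Finset.filter_true_of_mem
        intro a ha
        rw [hall a ha]
        exact hP0
      rw [this]
      have : ((B + 1 : ℝ) / n) ^ (2 * (d + 1)) ≤ 1 :=
        pow_le_one₀ hr0 hr1
      nlinarith [Nat.cast_nonneg (α := ℝ) M.card]

lemma fact_le_pow_mul_fact (a k : ℕ) : (a + k).factorial ≤ (a + k) ^ k * a.factorial := by
  induction k with
  | zero => simp
  | succ k ih =>
    calc (a + (k+1)).factorial = (a + k + 1) * (a + k).factorial := by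
          rw [← Nat.factorial_succ]; ring_nf
      _ ≤ (a + k + 1) * ((a + k) ^ k * a.factorial) := Nat.mul_le_mul_left _ ih
      _ ≤ (a + k + 1) * ((a + k + 1) ^ k * a.factorial) := by
          apply Nat.mul_le_mul_left
          exact Nat.mul_le_mul_right _ (Nat.pow_le_pow_left (by omega) k)
      _ = (a + (k+1)) ^ (k+1) * a.factorial := by ring_nf
lemma pow_mul_fact_le_fact (a k : ℕ) : (a + 1) ^ k * a.factorial ≤ (a + k).factorial := by
  induction k with
  | zero => simp
  | succ k ih =>
    calc (a + 1) ^ (k+1) * a.factorial = (a + 1) * ((a + 1) ^ k * a.factorial) := by ring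
      _ ≤ (a + 1) * (a + k).factorial := Nat.mul_le_mul_left _ ih
      _ ≤ (a + k + 1) * (a + k).factorial := Nat.mul_le_mul_right _ (by omega)
      _ = (a + (k+1)).factorial := by rw [← Nat.factorial_succ]; ring_nf

lemma keyA (s e d : ℕ) (hd : 1 ≤ d) :
    (s * (e + d)).factorial * (e.factorial) ^ s
      ≤ (s * d) ^ (s * d) * ((s * e).factorial * ((e + d).factorial) ^ s) := by
  have h1 : (s * (e + d)).factorial ≤ (s * (e + d)) ^ (s * d) * (s * e).factorial := by
    have := fact_le_pow_mul_fact (s * e) (s * d)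
    have he : s * e + s * d = s * (e + d) := by ring
    rwa [he] at this
  have h2 : ((e + 1) ^ d * e.factorial) ^ s ≤ ((e + d).factorial) ^ s :=
    Nat.pow_le_pow_left (pow_mul_fact_le_fact e d) s
  have h3 : s * (e + d) ≤ (s * d) * (e + 1) := by
    have : e + d ≤ d * (e + 1) := by
      have : e ≤ d * e := Nat.le_mul_of_pos_left e hd
      have hde : d * (e + 1) = d * e + d := by ring
      omega
    calc s * (e + d) ≤ s * (d * (e + 1)) := Nat.mul_le_mul_left s this
      _ = (s * d) * (e + 1) := by ring
  calc (s * (e + d)).factorial * (e.factorial) ^ s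
      ≤ ((s * (e + d)) ^ (s * d) * (s * e).factorial) * (e.factorial) ^ s :=
        Nat.mul_le_mul_right _ h1
    _ ≤ (((s * d) * (e + 1)) ^ (s * d) * (s * e).factorial) * (e.factorial) ^ s := by
        apply Nat.mul_le_mul_right
        exact Nat.mul_le_mul_right _ (Nat.pow_le_pow_left h3 _)
    _ = (s * d) ^ (s * d) * ((s * e).factorial * (((e + 1) ^ d * e.factorial) ^ s)) := by
        rw [mul_pow, mul_pow, mul_pow, ← pow_mul]
        ring_nf
    _ ≤ (s * d) ^ (s * d) * ((s * e).factorial * ((e + d).factorial) ^ s) := by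
        apply Nat.mul_le_mul_left
        exact Nat.mul_le_mul_left _ h2

lemma partA {s : ℕ} [NeZero s] {m d : ℕ} (hd : 1 ≤ d) (hmd : d ≤ m) :
    (1 : ℝ) / ((s * d : ℕ) : ℝ) ^ (s * d) ≤
      (Nat.multinomial Finset.univ (fun _ : ZMod s => m - d) : ℝ) /
        (Nat.multinomial Finset.univ (fun _ : ZMod s => m) : ℝ) := by
  have hs1 : 1 ≤ s := Nat.one_le_iff_ne_zero.2 (NeZero.ne s)
  have hcard : Fintype.card (ZMod s) = s := ZMod.card s
  have hsum : ∀ q : ℕ, (∑ _i : ZMod s, q) = s * q := by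
    intro q; rw [Finset.sum_const, Finset.card_univ, hcard, smul_eq_mul]
  have hprod : ∀ q : ℕ, (∏ _i : ZMod s, q.factorial) = q.factorial ^ s := by
    intro q; rw [Finset.prod_const, Finset.card_univ, hcard]
  set A := Nat.multinomial Finset.univ (fun _ : ZMod s => m - d) with hAdef
  set Bm := Nat.multinomial Finset.univ (fun _ : ZMod s => m) with hBdef
  have hA : (m - d).factorial ^ s * A = (s * (m - d)).factorial := by
    have := Nat.multinomial_spec (Finset.univ : Finset (ZMod s)) (fun _ => m - d)
    rwa [hprod, hsum] at this
  have hB : m.factorial ^ s * Bm = (s * m).factorial := by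
    have := Nat.multinomial_spec (Finset.univ : Finset (ZMod s)) (fun _ => m)
    rwa [hprod, hsum] at this
  have key := keyA s (m - d) d hd
  rw [Nat.sub_add_cancel hmd] at key
  rw [← hA, ← hB] at key
  have key2 : (m.factorial ^ s * (m - d).factorial ^ s) * Bm
      ≤ (m.factorial ^ s * (m - d).factorial ^ s) * ((s * d) ^ (s * d) * A) := by
    calc (m.factorial ^ s * (m - d).factorial ^ s) * Bm
        = m.factorial ^ s * Bm * (m - d).factorial ^ s := by ring
      _ ≤ (s * d) ^ (s * d) * ((m - d).factorial ^ s * A * m.factorial ^ s) := key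
      _ = (m.factorial ^ s * (m - d).factorial ^ s) * ((s * d) ^ (s * d) * A) := by ring
  have hFpos : 0 < m.factorial ^ s * (m - d).factorial ^ s :=
    Nat.mul_pos (Nat.pow_pos m.factorial_pos) (Nat.pow_pos (m - d).factorial_pos)
  have keyN : Bm ≤ (s * d) ^ (s * d) * A := Nat.le_of_mul_le_mul_left key2 hFpos
  have hBpos : 0 < Bm := Nat.multinomial_pos _ _
  have hKpos : (0 : ℝ) < ((s * d : ℕ) : ℝ) ^ (s * d) := by
    have : 0 < s * d := Nat.mul_pos (by omega) (by omega)
    positivity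
  rw [div_le_div_iff₀ hKpos (by exact_mod_cast hBpos)]
  have : (Bm : ℝ) ≤ ((s * d) ^ (s * d) * A : ℕ) := by exact_mod_cast keyN
  push_cast at this ⊢
  nlinarith [this]

lemma ncard_filter_eq {α : Type*} [Fintype α] (p : α → Prop) [DecidablePred p] :
    {x | p x}.ncard = (univ.filter p).card := by
  rw [Set.ncard_eq_toFinset_card', Set.toFinset_setOf]

lemma factor_bound {s m d n : ℕ} (hs : 2 ≤ s) (hd1 : 1 ≤ d) (hmd : d ≤ m) (hn : n = m * s) :
    (1 : ℝ) / ((s * d : ℕ) : ℝ) ^ (s * d)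
      ≤ ((((m - d : ℕ) : ℝ) + 1) / (n : ℝ)) ^ (2 * d) := by
  have hm1 : 1 ≤ m := le_trans hd1 hmd
  have hm0 : m ≠ 0 := by omega
  have hs0 : s ≠ 0 := by omega
  have hd0' : d ≠ 0 := by omega
  have hn1 : 1 ≤ n := by
    rw [hn]; exact Nat.one_le_iff_ne_zero.2 (Nat.mul_ne_zero hm0 hs0)
  have hn0 : (0 : ℝ) < n := by exact_mod_cast hn1
  have hsd1 : 1 ≤ s * d := Nat.one_le_iff_ne_zero.2 (Nat.mul_ne_zero hs0 hd0')
  have hsdR : (1 : ℝ) ≤ ((s * d : ℕ) : ℝ) := by exact_mod_cast hsd1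
  have hsdR0 : (0 : ℝ) < ((s * d : ℕ) : ℝ) := by linarith
  have hkey : n ≤ (s * d) * ((m - d) + 1) := by
    have h3 : m - d ≤ d * (m - d) := Nat.le_mul_of_pos_left _ hd1
    have h1 : m ≤ d * ((m - d) + 1) := by
      have h2 : d * ((m - d) + 1) = d * (m - d) + d := by ring
      omega
    calc n = m * s := hn
      _ ≤ (d * ((m - d) + 1)) * s := Nat.mul_le_mul_right _ h1
      _ = (s * d) * ((m - d) + 1) := by ring
  have hstep : (1 : ℝ) / ((s * d : ℕ) : ℝ) ≤ (((m - d : ℕ) : ℝ) + 1) / (n : ℝ) := by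
    rw [div_le_div_iff₀ hsdR0 hn0]
    have hc2 : (n : ℝ) ≤ (((s * d) * ((m - d) + 1) : ℕ) : ℝ) := by exact_mod_cast hkey
    push_cast at hc2 ⊢
    nlinarith [hc2]
  have h1K : (0 : ℝ) ≤ 1 / ((s * d : ℕ) : ℝ) := by positivity
  have h1K1 : 1 / ((s * d : ℕ) : ℝ) ≤ 1 := by
    rw [div_le_one hsdR0]; exact hsdR
  calc (1 : ℝ) / ((s * d : ℕ) : ℝ) ^ (s * d)
      = (1 / ((s * d : ℕ) : ℝ)) ^ (s * d) := by rw [div_pow, one_pow]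
    _ ≤ (1 / ((s * d : ℕ) : ℝ)) ^ (2 * d) := by
        apply pow_le_pow_of_le_one h1K h1K1
        nlinarith [hd1, hs]
    _ ≤ ((((m - d : ℕ) : ℝ) + 1) / (n : ℝ)) ^ (2 * d) :=
        pow_le_pow_left₀ h1K hstep _


/-- With `n = m·s` and `m ≥ d`: the ratio of multinomial coefficients
`(n - sd choose m-d, …, m-d) / (n choose m, …, m)` equals `1` when `d = 0` and
is at least `1/(sd)^{sd}` when `d ≥ 1`.  Consequently a `d`-junta-sum
`P : ℤ_s^n → G` that is nonzero somewhere on the balanced multislice is nonzero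
on at least a `1/(sd)^{sd}` fraction of the balanced multislice. -/
theorem stmt4 {s m d n : ℕ} (hs : 2 ≤ s) [NeZero s] (hmd : d ≤ m) (hn : n = m * s)
    {G : Type*} [AddCommGroup G]
    (P : (Fin n → ZMod s) → G) (hP : IsJuntaSum d P)
    (a₀ : Fin n → ZMod s)
    (ha₀ : ∀ i : ZMod s, {j : Fin n | a₀ j = i}.ncard = m)
    (hP0 : P a₀ ≠ 0) :
    ((d = 0 →
        (Nat.multinomial Finset.univ (fun _ : ZMod s => m - d) : ℝ) /
          (Nat.multinomial Finset.univ (fun _ : ZMod s => m) : ℝ) = 1) ∧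
      (1 ≤ d →
        (1 : ℝ) / ((s * d : ℕ) : ℝ) ^ (s * d) ≤
          (Nat.multinomial Finset.univ (fun _ : ZMod s => m - d) : ℝ) /
            (Nat.multinomial Finset.univ (fun _ : ZMod s => m) : ℝ))) ∧
    (1 : ℝ) / ((s * d : ℕ) : ℝ) ^ (s * d) ≤
      ({a : Fin n → ZMod s |
          (∀ i : ZMod s, {j : Fin n | a j = i}.ncard = m) ∧ P a ≠ 0}.ncard : ℝ) /
        ({a : Fin n → ZMod s | ∀ i : ZMod s, {j : Fin n | a j = i}.ncard = m}.ncard : ℝ) := by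
  classical
  refine ⟨⟨?_, ?_⟩, ?_⟩
  · intro hd0
    subst hd0
    rw [Nat.sub_zero, div_self]
    exact_mod_cast (Nat.multinomial_pos _ _).ne'
  · intro hd1
    exact partA hd1 hmd
  -- main probability bound
  · have hbridge : ∀ (a : Fin n → ZMod s) (i : ZMod s),
        {j : Fin n | a j = i}.ncard = (univ.filter (fun j => a j = i)).card := by
      intro a i
      exact ncard_filter_eq _
    have hmem : ∀ a : Fin n → ZMod s,
        a ∈ Mslice univ a₀ (fun _ : ZMod s => m) ↔
          (∀ i : ZMod s, {j : Fin n | a j = i}.ncard = m) := by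
      intro a
      rw [mem_Mslice]
      constructor
      · rintro ⟨_, h2⟩ i
        rw [hbridge a i]
        exact h2 i
      · intro h
        refine ⟨fun j hj => absurd (Finset.mem_univ j) hj, fun i => ?_⟩
        rw [← hbridge a i]
        exact h i
    set M := Mslice univ a₀ (fun _ : ZMod s => m) with hMdef
    have ha₀M : a₀ ∈ M := (hmem a₀).2 ha₀
    have hcore := core_lemma (n := n) (m - d) d P hP univ a₀ (fun _ => m) a₀ ha₀M hP0
      (fun σ => by show m - d + d ≤ m; omega)
    have hden : ({a : Fin n → ZMod s | ∀ i : ZMod s, {j : Fin n | a j = i}.ncard = m}.ncard)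
        = M.card := by
      rw [ncard_filter_eq]
      congr 1
      ext a
      rw [Finset.mem_filter]
      constructor
      · rintro ⟨_, h⟩; exact (hmem a).2 h
      · intro h; exact ⟨Finset.mem_univ a, (hmem a).1 h⟩
    have hnum : ({a : Fin n → ZMod s |
          (∀ i : ZMod s, {j : Fin n | a j = i}.ncard = m) ∧ P a ≠ 0}.ncard : ℕ)
        = ((M.filter (fun a => P a ≠ 0)).card : ℕ) := by
      rw [ncard_filter_eq]
      congr 1
      ext a
      rw [Finset.mem_filter, Finset.mem_filter]
      constructor
      · rintro ⟨_, h1, h2⟩; exact ⟨(hmem a).2 h1, h2⟩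
      · rintro ⟨h1, h2⟩; exact ⟨Finset.mem_univ a, (hmem a).1 h1, h2⟩
    rw [hden, hnum]
    have hMpos : 0 < M.card := Finset.card_pos.2 ⟨a₀, ha₀M⟩
    have hMposR : (0 : ℝ) < (M.card : ℝ) := by exact_mod_cast hMpos
    rw [le_div_iff₀ hMposR]
    have hfactor' : (1 : ℝ) / ((s * d : ℕ) : ℝ) ^ (s * d)
        ≤ ((((m - d : ℕ) : ℝ) + 1) / (n : ℝ)) ^ (2 * d) := by
      rcases Nat.eq_zero_or_pos d with hd0 | hd1
      · subst hd0; simp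
      · exact factor_bound hs hd1 hmd hn
    calc (1 : ℝ) / ((s * d : ℕ) : ℝ) ^ (s * d) * (M.card : ℝ)
        ≤ ((((m - d : ℕ) : ℝ) + 1) / (n : ℝ)) ^ (2 * d) * (M.card : ℝ) :=
          mul_le_mul_of_nonneg_right hfactor' (by positivity)
      _ ≤ ((M.filter (fun a => P a ≠ 0)).card : ℝ) := hcore
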